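/- Suppose r ≥ 2 and n ≥ 1, and fix m ∈ {1, …, n} and k ∈ {1, …, r}. Then: ∑_{l=1}^r E[S_k² (ρ_m(l) − ρ_m(k))⁴] ≤ 0.1455 r⁵; ∑_{l=1}^r E[S_k⁴ (ρ_m(l) − ρ_m(k))⁴] ≤ 0.6717 r⁵; and ∑_{l=1}^r E[S_k² (ρ_m(l) − ρ_m(k))⁶] ≤ 0.09116 r⁷. -/

import Mathlib

open MeasureTheory Finset Real

noncomputable section

instance instMSPerm (r : ℕ) : MeasurableSpace (Equiv.Perm (Fin r)) := ⊤

/-- The joint law of `n` independent uniformly random permutations of `{1, …, r}`: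
the uniform probability measure on the finite product space. -/
def friedmanMeasure (n r : ℕ) : Measure (Fin n → Equiv.Perm (Fin r)) :=
  (PMF.uniformOfFintype (Fin n → Equiv.Perm (Fin r))).toMeasure

/-- `ρ_i(j) = π_i(j) - (r+1)/2`, where `π_i(j) ∈ {1, …, r}` is the rank assigned by the
`i`-th permutation to treatment `j` (a permutation of `Fin r` assigns values in `{0, …, r-1}`,
hence the `+ 1`). -/
def rho (n r : ℕ) (i : Fin n) (j : Fin r) (ω : Fin n → Equiv.Perm (Fin r)) : ℝ :=
  ((ω i j : ℕ) : ℝ) + 1 - ((r : ℝ) + 1) / 2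

/-- `S_j = (√12/√(r(r+1)n)) ∑_{i=1}^n ρ_i(j)`. -/
def Sstat (n r : ℕ) (j : Fin r) (ω : Fin n → Equiv.Perm (Fin r)) : ℝ :=
  Real.sqrt 12 / Real.sqrt ((r : ℝ) * ((r : ℝ) + 1) * (n : ℝ)) * ∑ i, rho n r i j ω

/-- Friedman's statistic `F_r = ∑_{j=1}^r S_j²`. -/
def friedman (n r : ℕ) (ω : Fin n → Equiv.Perm (Fin r)) : ℝ :=
  ∑ j, (Sstat n r j ω) ^ 2

/-- The chi-square distribution with `p` degrees of freedom: the Gamma distribution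
with shape `p/2` and rate `1/2`. -/
def chiSq (p : ℕ) : Measure ℝ := ProbabilityTheory.gammaMeasure ((p : ℝ) / 2) (1 / 2)

end


section GauntReinertAux

noncomputable section FriedmanAux

abbrev GG (r : ℕ) := Equiv.Perm (Fin r)

/-- centered rank value -/
def caF (r : ℕ) (a : Fin r) : ℝ := ((a : ℕ) : ℝ) + 1 - ((r : ℝ) + 1) / 2

/-- centered power sums -/
def PpF (r p : ℕ) : ℝ := ∑ a : Fin r, caF r a ^ p

/-- double centered sums -/
def MrF (r p q : ℕ) : ℝ := ∑ a : Fin r, ∑ b : Fin r, caF r a ^ p * (caF r b - caF r a) ^ q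

/-- permutation moments -/
def mupF (r : ℕ) (k : Fin r) (p : ℕ) : ℝ := ∑ prm : GG r, caF r (prm k) ^ p

/-- partial sums of centered ranks -/
def TTF (n r : ℕ) (k : Fin r) (s : Finset (Fin n)) (ω : Fin n → GG r) : ℝ :=
  ∑ i ∈ s, caF r (ω i k)

lemma update_bijF {n r : ℕ} (j : Fin n) (σ : GG r) :
    Function.Bijective (fun ω : Fin n → GG r => Function.update ω j (σ * ω j)) := by
  refine Function.bijective_iff_has_inverse.2
    ⟨fun ω => Function.update ω j (σ⁻¹ * ω j), fun ω => ?_, fun ω => ?_⟩ <;>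
  · funext i
    by_cases hi : i = j
    · subst hi; simp
    · simp [Function.update_of_ne hi]

/-- Splitting lemma: if `F` doesn't depend on coordinate `j`, the sum factorizes. -/
lemma split_lemmaF {n r : ℕ} (j : Fin n) (F : (Fin n → GG r) → ℝ)
    (hF : ∀ ω prm, F (Function.update ω j prm) = F ω) (h : GG r → ℝ) :
    (Fintype.card (GG r) : ℝ) * ∑ ω : Fin n → GG r, F ω * h (ω j)
      = (∑ ω : Fin n → GG r, F ω) * (∑ prm : GG r, h prm) := by
  have key : ∀ σ : GG r, ∑ ω : Fin n → GG r, F ω * h (ω j)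
      = ∑ ω : Fin n → GG r, F ω * h (σ * ω j) := by
    intro σ
    refine Fintype.sum_bijective _ (update_bijF j σ⁻¹) _ _ (fun ω => ?_)
    rw [hF]
    simp
  calc (Fintype.card (GG r) : ℝ) * ∑ ω : Fin n → GG r, F ω * h (ω j)
      = ∑ _σ : GG r, ∑ ω : Fin n → GG r, F ω * h (ω j) := by
        rw [Finset.sum_const, card_univ, nsmul_eq_mul]
    _ = ∑ σ : GG r, ∑ ω : Fin n → GG r, F ω * h (σ * ω j) :=
        Finset.sum_congr rfl fun σ _ => key σ
    _ = ∑ ω : Fin n → GG r, F ω * ∑ σ : GG r, h (σ * ω j) := by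
        rw [Finset.sum_comm]
        exact Finset.sum_congr rfl fun ω _ => by rw [Finset.mul_sum]
    _ = ∑ ω : Fin n → GG r, F ω * ∑ prm : GG r, h prm :=
        Finset.sum_congr rfl fun ω _ => by
          congr 1
          exact Fintype.sum_bijective _ (Group.mulRight_bijective (ω j)) _ _ (fun σ => rfl)
    _ = (∑ ω : Fin n → GG r, F ω) * (∑ prm : GG r, h prm) := by rw [Finset.sum_mul]

lemma ggF_pos {r : ℕ} : (0 : ℝ) < (Fintype.card (GG r) : ℝ) := by
  exact_mod_cast Fintype.card_pos

/-- division form of the splitting lemma -/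
lemma split_divF {n r : ℕ} (j : Fin n) (F : (Fin n → GG r) → ℝ)
    (hF : ∀ ω prm, F (Function.update ω j prm) = F ω) (h : GG r → ℝ) :
    ∑ ω : Fin n → GG r, F ω * h (ω j)
      = (∑ ω : Fin n → GG r, F ω) * (∑ prm : GG r, h prm) / (Fintype.card (GG r) : ℝ) := by
  rw [eq_div_iff (ne_of_gt (ggF_pos (r := r))), mul_comm _ ((Fintype.card (GG r) : ℝ))]
  exact split_lemmaF j F hF h

lemma exists_perm_pairF {r : ℕ} {x y k l : Fin r} (hxy : x ≠ y) (hkl : k ≠ l) :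
    ∃ τ : GG r, τ x = k ∧ τ y = l := by
  refine ⟨Equiv.swap (Equiv.swap x k y) l * Equiv.swap x k, ?_, ?_⟩
  · rw [Equiv.Perm.mul_apply, Equiv.swap_apply_left]
    apply Equiv.swap_apply_of_ne_of_ne
    · intro hk
      exact hxy (Equiv.injective _ (by rw [Equiv.swap_apply_left, ← hk]))
    · exact hkl
  · rw [Equiv.Perm.mul_apply, Equiv.swap_apply_left]

/-- value sum for a single coordinate of a uniformly random permutation -/
lemma single_valueF {r : ℕ} (k : Fin r) (f : Fin r → ℝ) :
    (r : ℝ) * ∑ prm : GG r, f (prm k) = (Fintype.card (GG r) : ℝ) * ∑ a, f a := by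
  have hpos : ∀ x : Fin r, ∑ prm : GG r, f (prm x) = ∑ prm : GG r, f (prm k) := by
    intro x
    refine Fintype.sum_bijective (fun prm => prm * Equiv.swap k x)
      (Group.mulRight_bijective _) _ _ (fun prm => ?_)
    simp [Equiv.Perm.mul_apply]
  calc (r : ℝ) * ∑ prm : GG r, f (prm k)
      = ∑ x : Fin r, ∑ prm : GG r, f (prm x) := by
        rw [Finset.sum_congr rfl (fun x _ => hpos x), Finset.sum_const, card_univ,
          Fintype.card_fin, nsmul_eq_mul]
    _ = ∑ prm : GG r, ∑ x : Fin r, f (prm x) := Finset.sum_comm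
    _ = ∑ prm : GG r, ∑ a : Fin r, f a :=
        Finset.sum_congr rfl fun prm _ => Fintype.sum_bijective prm prm.bijective _ _ (fun x => rfl)
    _ = (Fintype.card (GG r) : ℝ) * ∑ a, f a := by
        rw [Finset.sum_const, card_univ, nsmul_eq_mul]

/-- value sum for a pair of coordinates of a uniformly random permutation -/
lemma pair_valueF {r : ℕ} {k l : Fin r} (hkl : k ≠ l) (f : Fin r → Fin r → ℝ) :
    ((r : ℝ) * ((r : ℝ) - 1)) * ∑ prm : GG r, f (prm k) (prm l)
      = (Fintype.card (GG r) : ℝ) * ∑ p ∈ Finset.univ.offDiag, f p.1 p.2 := by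
  have hpos : ∀ x y : Fin r, x ≠ y →
      ∑ prm : GG r, f (prm x) (prm y) = ∑ prm : GG r, f (prm k) (prm l) := by
    intro x y hxy
    obtain ⟨τ, hτx, hτy⟩ := exists_perm_pairF hkl hxy
    refine Fintype.sum_bijective (fun prm => prm * τ)
      (Group.mulRight_bijective _) _ _ (fun prm => ?_)
    simp [Equiv.Perm.mul_apply, hτx, hτy]
  have hcard : ((Finset.univ.offDiag : Finset (Fin r × Fin r)).card : ℝ)
      = (r : ℝ) * ((r : ℝ) - 1) := by
    rw [Finset.offDiag_card, card_univ, Fintype.card_fin]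
    rcases Nat.eq_zero_or_pos r with h0 | h1
    · subst h0; simp
    · have : r ≤ r * r := Nat.le_mul_of_pos_left r h1
      push_cast [Nat.cast_sub this]
      ring
  calc ((r : ℝ) * ((r : ℝ) - 1)) * ∑ prm : GG r, f (prm k) (prm l)
      = ∑ p ∈ Finset.univ.offDiag, ∑ prm : GG r, f (prm p.1) (prm p.2) := by
        rw [Finset.sum_congr rfl (fun p hp => hpos p.1 p.2 (Finset.mem_offDiag.1 hp).2.2),
          Finset.sum_const, nsmul_eq_mul, hcard]
    _ = ∑ prm : GG r, ∑ p ∈ Finset.univ.offDiag, f (prm p.1) (prm p.2) := Finset.sum_comm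
    _ = ∑ prm : GG r, ∑ p ∈ Finset.univ.offDiag, f p.1 p.2 := by
        refine Finset.sum_congr rfl fun prm _ => ?_
        refine Finset.sum_nbij' (fun p => (prm p.1, prm p.2)) (fun p => (prm⁻¹ p.1, prm⁻¹ p.2))
          ?_ ?_ ?_ ?_ ?_ <;>
          simp +contextual [Finset.mem_offDiag, ne_eq, EmbeddingLike.apply_eq_iff_eq,
            not_false_iff, imp_self, Equiv.Perm.inv_def]
    _ = (Fintype.card (GG r) : ℝ) * ∑ p ∈ Finset.univ.offDiag, f p.1 p.2 := by
        rw [Finset.sum_const, card_univ, nsmul_eq_mul]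

end FriedmanAux

noncomputable section MomAux

/-- moments of a single permutation value -/
lemma mup_eqF {r : ℕ} (k : Fin r) (p : ℕ) :
    (r : ℝ) * mupF r k p = (Fintype.card (GG r) : ℝ) * PpF r p :=
  single_valueF k (fun a => caF r a ^ p)

lemma mup_divF {r : ℕ} (k : Fin r) (p : ℕ) :
    mupF r k p = (Fintype.card (GG r) : ℝ) * PpF r p / (r : ℝ) := by
  have hr : (0:ℝ) < (r:ℝ) := by exact_mod_cast k.pos
  rw [eq_div_iff (ne_of_gt hr), mul_comm, mup_eqF]

lemma TT_updateF {n r : ℕ} (k : Fin r) (s : Finset (Fin n)) {j : Fin n} (hj : j ∉ s)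
    (ω : Fin n → GG r) (prm : GG r) :
    TTF n r k s (Function.update ω j prm) = TTF n r k s ω :=
  Finset.sum_congr rfl fun i hi => by
    rw [Function.update_of_ne (ne_of_mem_of_not_mem hi hj)]

/-- odd centered power sums vanish -/
lemma Pp_oddF (r : ℕ) {p : ℕ} (hp : Odd p) : PpF r p = 0 := by
  have key : PpF r p = -PpF r p := by
    unfold PpF
    nth_rewrite 1 [← Equiv.sum_comp (Fin.revPerm) (fun a => caF r a ^ p)]
    rw [← Finset.sum_neg_distrib]
    refine Finset.sum_congr rfl fun a _ => ?_
    have hca : caF r (Fin.revPerm a) = -caF r a := by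
      unfold caF
      have hval : ((Fin.rev a : ℕ) : ℝ) = (r : ℝ) - ((a : ℕ) : ℝ) - 1 := by
        rw [Fin.val_rev]
        have : (a : ℕ) + 1 ≤ r := a.2
        push_cast [Nat.cast_sub this]
        ring
      simp only [Fin.revPerm_apply, hval]
      ring
    rw [hca, hp.neg_pow]
  linarith

/-- Moments of partial sums `TTF`. -/
lemma TT_momentsF {n r : ℕ} (k : Fin r) (s : Finset (Fin n)) :
    (∑ ω : Fin n → GG r, TTF n r k s ω = 0) ∧
    (∑ ω : Fin n → GG r, TTF n r k s ω ^ 2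
        = (s.card : ℝ) * mupF r k 2 * (Fintype.card (Fin n → GG r) : ℝ)
          / (Fintype.card (GG r) : ℝ)) ∧
    (∑ ω : Fin n → GG r, TTF n r k s ω ^ 3 = 0) ∧
    (∑ ω : Fin n → GG r, TTF n r k s ω ^ 4
        = (s.card : ℝ) * mupF r k 4 * (Fintype.card (Fin n → GG r) : ℝ)
            / (Fintype.card (GG r) : ℝ)
          + (3 * (s.card : ℝ) ^ 2 - 3 * (s.card : ℝ)) * (mupF r k 2) ^ 2
            * (Fintype.card (Fin n → GG r) : ℝ) / (Fintype.card (GG r) : ℝ) ^ 2) := by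
  have hgg : (0:ℝ) < (Fintype.card (GG r) : ℝ) := ggF_pos
  have hr : (0:ℝ) < (r:ℝ) := by exact_mod_cast k.pos
  have hmu1 : mupF r k 1 = 0 := by
    rw [mup_divF, Pp_oddF r (by norm_num)]; ring
  have hmu3 : mupF r k 3 = 0 := by
    rw [mup_divF, Pp_oddF r ⟨1, by norm_num⟩]; ring
  induction s using Finset.induction_on with
  | empty =>
      refine ⟨by simp [TTF], by simp [TTF], by simp [TTF], by simp [TTF]⟩
  | insert _ _ hj _ =>
      rename_i j s ih
      obtain ⟨ih1, ih2, ih3, ih4⟩ := ih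
      have hins : ∀ ω : Fin n → GG r,
          TTF n r k (insert j s) ω = TTF n r k s ω + caF r (ω j k) := by
        intro ω
        unfold TTF
        rw [Finset.sum_insert hj]
        ring
      have hsplit : ∀ a b : ℕ, ∑ ω : Fin n → GG r, TTF n r k s ω ^ a * caF r (ω j k) ^ b
          = (∑ ω : Fin n → GG r, TTF n r k s ω ^ a) * mupF r k b
            / (Fintype.card (GG r) : ℝ) := by
        intro a b
        exact split_divF j (fun ω => TTF n r k s ω ^ a)
          (fun ω prm => by
            show TTF n r k s (Function.update ω j prm) ^ a = _
            rw [TT_updateF k s hj]) (fun prm => caF r (prm k) ^ b)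
      have hconst : ∀ b : ℕ, ∑ ω : Fin n → GG r, caF r (ω j k) ^ b
          = (Fintype.card (Fin n → GG r) : ℝ) * mupF r k b / (Fintype.card (GG r) : ℝ) := by
        intro b
        have := split_divF (r := r) j (fun _ => (1:ℝ)) (fun ω prm => rfl)
          (fun prm => caF r (prm k) ^ b)
        simpa [mupF] using this
      have hcard : ((insert j s).card : ℝ) = (s.card : ℝ) + 1 := by
        rw [Finset.card_insert_of_notMem hj]; push_cast; ring
      refine ⟨?_, ?_, ?_, ?_⟩
      · calc ∑ ω : Fin n → GG r, TTF n r k (insert j s) ω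
            = ∑ ω : Fin n → GG r, (TTF n r k s ω + caF r (ω j k)) :=
              Finset.sum_congr rfl fun ω _ => hins ω
          _ = ∑ ω : Fin n → GG r, TTF n r k s ω + ∑ ω : Fin n → GG r, caF r (ω j k) ^ 1 := by
              rw [← Finset.sum_add_distrib]
              exact Finset.sum_congr rfl fun ω _ => by ring
          _ = 0 := by rw [ih1, hconst 1, hmu1]; ring
      · calc ∑ ω : Fin n → GG r, TTF n r k (insert j s) ω ^ 2
            = ∑ ω : Fin n → GG r, (TTF n r k s ω ^ 2
                + 2 * (TTF n r k s ω ^ 1 * caF r (ω j k) ^ 1)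
                + 1 * caF r (ω j k) ^ 2) :=
              Finset.sum_congr rfl fun ω _ => by rw [hins ω]; ring
          _ = (∑ ω : Fin n → GG r, TTF n r k s ω ^ 2)
                + 2 * (∑ ω : Fin n → GG r, TTF n r k s ω ^ 1 * caF r (ω j k) ^ 1)
                + (∑ ω : Fin n → GG r, caF r (ω j k) ^ 2) := by
              simp only [Finset.sum_add_distrib, ← Finset.mul_sum, one_mul]
          _ = _ := by
              rw [ih2, hsplit 1 1, hconst 2, hmu1, hcard]
              have h1 : ∑ ω : Fin n → GG r, TTF n r k s ω ^ 1
                  = ∑ ω : Fin n → GG r, TTF n r k s ω :=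
                Finset.sum_congr rfl fun ω _ => by ring
              rw [h1, ih1]
              field_simp
              ring
      · calc ∑ ω : Fin n → GG r, TTF n r k (insert j s) ω ^ 3
            = ∑ ω : Fin n → GG r, (TTF n r k s ω ^ 3
                + 3 * (TTF n r k s ω ^ 2 * caF r (ω j k) ^ 1)
                + 3 * (TTF n r k s ω ^ 1 * caF r (ω j k) ^ 2)
                + 1 * caF r (ω j k) ^ 3) :=
              Finset.sum_congr rfl fun ω _ => by rw [hins ω]; ring
          _ = (∑ ω : Fin n → GG r, TTF n r k s ω ^ 3)
                + 3 * (∑ ω : Fin n → GG r, TTF n r k s ω ^ 2 * caF r (ω j k) ^ 1)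
                + 3 * (∑ ω : Fin n → GG r, TTF n r k s ω ^ 1 * caF r (ω j k) ^ 2)
                + (∑ ω : Fin n → GG r, caF r (ω j k) ^ 3) := by
              simp only [Finset.sum_add_distrib, ← Finset.mul_sum, one_mul]
          _ = 0 := by
              rw [ih3, hsplit 2 1, hsplit 1 2, hconst 3, hmu1, hmu3]
              have h1 : ∑ ω : Fin n → GG r, TTF n r k s ω ^ 1
                  = ∑ ω : Fin n → GG r, TTF n r k s ω :=
                Finset.sum_congr rfl fun ω _ => by ring
              rw [h1, ih1]
              ring
      · calc ∑ ω : Fin n → GG r, TTF n r k (insert j s) ω ^ 4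
            = ∑ ω : Fin n → GG r, (TTF n r k s ω ^ 4
                + 4 * (TTF n r k s ω ^ 3 * caF r (ω j k) ^ 1)
                + 6 * (TTF n r k s ω ^ 2 * caF r (ω j k) ^ 2)
                + 4 * (TTF n r k s ω ^ 1 * caF r (ω j k) ^ 3)
                + 1 * caF r (ω j k) ^ 4) :=
              Finset.sum_congr rfl fun ω _ => by rw [hins ω]; ring
          _ = (∑ ω : Fin n → GG r, TTF n r k s ω ^ 4)
                + 4 * (∑ ω : Fin n → GG r, TTF n r k s ω ^ 3 * caF r (ω j k) ^ 1)
                + 6 * (∑ ω : Fin n → GG r, TTF n r k s ω ^ 2 * caF r (ω j k) ^ 2)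
                + 4 * (∑ ω : Fin n → GG r, TTF n r k s ω ^ 1 * caF r (ω j k) ^ 3)
                + (∑ ω : Fin n → GG r, caF r (ω j k) ^ 4) := by
              simp only [Finset.sum_add_distrib, ← Finset.mul_sum, one_mul]
          _ = _ := by
              rw [ih4, hsplit 3 1, hsplit 2 2, hsplit 1 3, hconst 4, hmu1, hmu3, ih2, hcard]
              have h1 : ∑ ω : Fin n → GG r, TTF n r k s ω ^ 1
                  = ∑ ω : Fin n → GG r, TTF n r k s ω :=
                Finset.sum_congr rfl fun ω _ => by ring
              rw [h1, ih1, ih3]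
              field_simp
              ring

end MomAux

noncomputable section SumVAux

lemma Mr_offDiagF {r : ℕ} (p q : ℕ) (hq : q ≠ 0) :
    ∑ x ∈ (Finset.univ : Finset (Fin r)).offDiag,
        caF r x.1 ^ p * (caF r x.2 - caF r x.1) ^ q = MrF r p q := by
  unfold MrF
  rw [← Finset.sum_product']
  refine Finset.sum_subset (by intro x _; simp) fun x hx hnx => ?_
  have hx12 : x.1 = x.2 := by
    by_contra hne
    exact hnx (Finset.mem_offDiag.2 ⟨Finset.mem_univ _, Finset.mem_univ _, hne⟩)
  rw [hx12, sub_self, zero_pow hq, mul_zero]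

lemma pair_value_divF {r : ℕ} (hr : 2 ≤ r) {k l : Fin r} (hkl : k ≠ l) (p q : ℕ) (hq : q ≠ 0) :
    ∑ prm : GG r, caF r (prm k) ^ p * (caF r (prm l) - caF r (prm k)) ^ q
      = (Fintype.card (GG r) : ℝ) * MrF r p q / ((r : ℝ) * ((r : ℝ) - 1)) := by
  have hr1 : (1:ℝ) < (r:ℝ) := by exact_mod_cast hr
  have hne : (r : ℝ) * ((r : ℝ) - 1) ≠ 0 := by nlinarith
  rw [eq_div_iff hne]
  rw [mul_comm (∑ prm : GG r, _) ((r:ℝ) * ((r:ℝ)-1))]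
  rw [pair_valueF hkl (fun a b => caF r a ^ p * (caF r b - caF r a) ^ q)]
  rw [Mr_offDiagF p q hq]

/-- summed over the second treatment -/
lemma sumVF {r : ℕ} (hr : 2 ≤ r) (k : Fin r) (p q : ℕ) (hq : q ≠ 0) :
    ∑ l : Fin r, ∑ prm : GG r, caF r (prm k) ^ p * (caF r (prm l) - caF r (prm k)) ^ q
      = (Fintype.card (GG r) : ℝ) * MrF r p q / (r : ℝ) := by
  have hr1 : (1:ℝ) < (r:ℝ) := by exact_mod_cast hr
  rw [← Finset.sum_erase_add _ _ (Finset.mem_univ k)]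
  have hk0 : ∑ prm : GG r, caF r (prm k) ^ p * (caF r (prm k) - caF r (prm k)) ^ q = 0 := by
    apply Finset.sum_eq_zero
    intro prm _
    rw [sub_self, zero_pow hq, mul_zero]
  rw [hk0, add_zero]
  have hval : ∀ l ∈ Finset.univ.erase k,
      ∑ prm : GG r, caF r (prm k) ^ p * (caF r (prm l) - caF r (prm k)) ^ q
        = (Fintype.card (GG r) : ℝ) * MrF r p q / ((r : ℝ) * ((r : ℝ) - 1)) := by
    intro l hl
    exact pair_value_divF hr (Ne.symm (Finset.mem_erase.1 hl).1) p q hq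
  rw [Finset.sum_congr rfl hval, Finset.sum_const, nsmul_eq_mul]
  have hcard : (((Finset.univ : Finset (Fin r)).erase k).card : ℝ) = (r : ℝ) - 1 := by
    rw [Finset.card_erase_of_mem (Finset.mem_univ k), card_univ, Fintype.card_fin]
    have : 1 ≤ r := by omega
    push_cast [Nat.cast_sub this]
    ring
  rw [hcard]
  have h2 : (r:ℝ) - 1 ≠ 0 := by nlinarith
  have h0 : (r:ℝ) ≠ 0 := by nlinarith
  field_simp

end SumVAux

noncomputable section PolyAux

lemma fauF1 : ∀ r : ℕ, ∑ a ∈ range r, (a:ℝ)^1 = (((-1) * (r:ℝ)^1 + (1) * (r:ℝ)^2) / 2) := by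
  intro r
  induction r with
  | zero => simp
  | succ m ih => rw [Finset.sum_range_succ, ih]; push_cast; ring

lemma fauF2 : ∀ r : ℕ, ∑ a ∈ range r, (a:ℝ)^2 = (((1) * (r:ℝ)^1 + (-3) * (r:ℝ)^2 + (2) * (r:ℝ)^3) / 6) := by
  intro r
  induction r with
  | zero => simp
  | succ m ih => rw [Finset.sum_range_succ, ih]; push_cast; ring

lemma fauF3 : ∀ r : ℕ, ∑ a ∈ range r, (a:ℝ)^3 = (((1) * (r:ℝ)^2 + (-2) * (r:ℝ)^3 + (1) * (r:ℝ)^4) / 4) := by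
  intro r
  induction r with
  | zero => simp
  | succ m ih => rw [Finset.sum_range_succ, ih]; push_cast; ring

lemma fauF4 : ∀ r : ℕ, ∑ a ∈ range r, (a:ℝ)^4 = (((-1) * (r:ℝ)^1 + (10) * (r:ℝ)^3 + (-15) * (r:ℝ)^4 + (6) * (r:ℝ)^5) / 30) := by
  intro r
  induction r with
  | zero => simp
  | succ m ih => rw [Finset.sum_range_succ, ih]; push_cast; ring

lemma fauF5 : ∀ r : ℕ, ∑ a ∈ range r, (a:ℝ)^5 = (((-1) * (r:ℝ)^2 + (5) * (r:ℝ)^4 + (-6) * (r:ℝ)^5 + (2) * (r:ℝ)^6) / 12) := by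
  intro r
  induction r with
  | zero => simp
  | succ m ih => rw [Finset.sum_range_succ, ih]; push_cast; ring

lemma fauF6 : ∀ r : ℕ, ∑ a ∈ range r, (a:ℝ)^6 = (((1) * (r:ℝ)^1 + (-7) * (r:ℝ)^3 + (21) * (r:ℝ)^5 + (-21) * (r:ℝ)^6 + (6) * (r:ℝ)^7) / 42) := by
  intro r
  induction r with
  | zero => simp
  | succ m ih => rw [Finset.sum_range_succ, ih]; push_cast; ring

lemma fauF7 : ∀ r : ℕ, ∑ a ∈ range r, (a:ℝ)^7 = (((2) * (r:ℝ)^2 + (-7) * (r:ℝ)^4 + (14) * (r:ℝ)^6 + (-12) * (r:ℝ)^7 + (3) * (r:ℝ)^8) / 24) := by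
  intro r
  induction r with
  | zero => simp
  | succ m ih => rw [Finset.sum_range_succ, ih]; push_cast; ring

lemma fauF8 : ∀ r : ℕ, ∑ a ∈ range r, (a:ℝ)^8 = (((-3) * (r:ℝ)^1 + (20) * (r:ℝ)^3 + (-42) * (r:ℝ)^5 + (60) * (r:ℝ)^7 + (-45) * (r:ℝ)^8 + (10) * (r:ℝ)^9) / 90) := by
  intro r
  induction r with
  | zero => simp
  | succ m ih => rw [Finset.sum_range_succ, ih]; push_cast; ring

lemma PpclosedF1 (r : ℕ) : PpF r 1 = ((0) / 1) := by
  unfold PpF caF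
  rw [Fin.sum_univ_eq_sum_range (fun a => (((a:ℕ):ℝ)+1-((r:ℝ)+1)/2)^1)]
  have h : ∀ a ∈ Finset.range r, ((a:ℝ)+1-((r:ℝ)+1)/2)^1 =
      (1*((1-(r:ℝ))/2)^0)*(a:ℝ)^1 + ((1-(r:ℝ))/2)^1 := fun a _ => by ring
  rw [Finset.sum_congr rfl h]
  simp only [Finset.sum_add_distrib, ← Finset.mul_sum, Finset.sum_const, Finset.card_range,
    nsmul_eq_mul]
  rw [fauF1]
  ring

lemma PpclosedF2 (r : ℕ) : PpF r 2 = (((-1) * (r:ℝ)^1 + (1) * (r:ℝ)^3) / 12) := by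
  unfold PpF caF
  rw [Fin.sum_univ_eq_sum_range (fun a => (((a:ℕ):ℝ)+1-((r:ℝ)+1)/2)^2)]
  have h : ∀ a ∈ Finset.range r, ((a:ℝ)+1-((r:ℝ)+1)/2)^2 =
      (1*((1-(r:ℝ))/2)^0)*(a:ℝ)^2 + (2*((1-(r:ℝ))/2)^1)*(a:ℝ)^1 + ((1-(r:ℝ))/2)^2 := fun a _ => by ring
  rw [Finset.sum_congr rfl h]
  simp only [Finset.sum_add_distrib, ← Finset.mul_sum, Finset.sum_const, Finset.card_range,
    nsmul_eq_mul]
  rw [fauF2, fauF1]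
  ring

lemma PpclosedF3 (r : ℕ) : PpF r 3 = ((0) / 1) := by
  unfold PpF caF
  rw [Fin.sum_univ_eq_sum_range (fun a => (((a:ℕ):ℝ)+1-((r:ℝ)+1)/2)^3)]
  have h : ∀ a ∈ Finset.range r, ((a:ℝ)+1-((r:ℝ)+1)/2)^3 =
      (1*((1-(r:ℝ))/2)^0)*(a:ℝ)^3 + (3*((1-(r:ℝ))/2)^1)*(a:ℝ)^2 + (3*((1-(r:ℝ))/2)^2)*(a:ℝ)^1 + ((1-(r:ℝ))/2)^3 := fun a _ => by ring
  rw [Finset.sum_congr rfl h]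
  simp only [Finset.sum_add_distrib, ← Finset.mul_sum, Finset.sum_const, Finset.card_range,
    nsmul_eq_mul]
  rw [fauF3, fauF2, fauF1]
  ring

lemma PpclosedF4 (r : ℕ) : PpF r 4 = (((7) * (r:ℝ)^1 + (-10) * (r:ℝ)^3 + (3) * (r:ℝ)^5) / 240) := by
  unfold PpF caF
  rw [Fin.sum_univ_eq_sum_range (fun a => (((a:ℕ):ℝ)+1-((r:ℝ)+1)/2)^4)]
  have h : ∀ a ∈ Finset.range r, ((a:ℝ)+1-((r:ℝ)+1)/2)^4 =
      (1*((1-(r:ℝ))/2)^0)*(a:ℝ)^4 + (4*((1-(r:ℝ))/2)^1)*(a:ℝ)^3 + (6*((1-(r:ℝ))/2)^2)*(a:ℝ)^2 + (4*((1-(r:ℝ))/2)^3)*(a:ℝ)^1 + ((1-(r:ℝ))/2)^4 := fun a _ => by ring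
  rw [Finset.sum_congr rfl h]
  simp only [Finset.sum_add_distrib, ← Finset.mul_sum, Finset.sum_const, Finset.card_range,
    nsmul_eq_mul]
  rw [fauF4, fauF3, fauF2, fauF1]
  ring

lemma PpclosedF5 (r : ℕ) : PpF r 5 = ((0) / 1) := by
  unfold PpF caF
  rw [Fin.sum_univ_eq_sum_range (fun a => (((a:ℕ):ℝ)+1-((r:ℝ)+1)/2)^5)]
  have h : ∀ a ∈ Finset.range r, ((a:ℝ)+1-((r:ℝ)+1)/2)^5 =
      (1*((1-(r:ℝ))/2)^0)*(a:ℝ)^5 + (5*((1-(r:ℝ))/2)^1)*(a:ℝ)^4 + (10*((1-(r:ℝ))/2)^2)*(a:ℝ)^3 + (10*((1-(r:ℝ))/2)^3)*(a:ℝ)^2 + (5*((1-(r:ℝ))/2)^4)*(a:ℝ)^1 + ((1-(r:ℝ))/2)^5 := fun a _ => by ring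
  rw [Finset.sum_congr rfl h]
  simp only [Finset.sum_add_distrib, ← Finset.mul_sum, Finset.sum_const, Finset.card_range,
    nsmul_eq_mul]
  rw [fauF5, fauF4, fauF3, fauF2, fauF1]
  ring

lemma PpclosedF6 (r : ℕ) : PpF r 6 = (((-31) * (r:ℝ)^1 + (49) * (r:ℝ)^3 + (-21) * (r:ℝ)^5 + (3) * (r:ℝ)^7) / 1344) := by
  unfold PpF caF
  rw [Fin.sum_univ_eq_sum_range (fun a => (((a:ℕ):ℝ)+1-((r:ℝ)+1)/2)^6)]
  have h : ∀ a ∈ Finset.range r, ((a:ℝ)+1-((r:ℝ)+1)/2)^6 =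
      (1*((1-(r:ℝ))/2)^0)*(a:ℝ)^6 + (6*((1-(r:ℝ))/2)^1)*(a:ℝ)^5 + (15*((1-(r:ℝ))/2)^2)*(a:ℝ)^4 + (20*((1-(r:ℝ))/2)^3)*(a:ℝ)^3 + (15*((1-(r:ℝ))/2)^4)*(a:ℝ)^2 + (6*((1-(r:ℝ))/2)^5)*(a:ℝ)^1 + ((1-(r:ℝ))/2)^6 := fun a _ => by ring
  rw [Finset.sum_congr rfl h]
  simp only [Finset.sum_add_distrib, ← Finset.mul_sum, Finset.sum_const, Finset.card_range,
    nsmul_eq_mul]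
  rw [fauF6, fauF5, fauF4, fauF3, fauF2, fauF1]
  ring

lemma PpclosedF7 (r : ℕ) : PpF r 7 = ((0) / 1) := by
  unfold PpF caF
  rw [Fin.sum_univ_eq_sum_range (fun a => (((a:ℕ):ℝ)+1-((r:ℝ)+1)/2)^7)]
  have h : ∀ a ∈ Finset.range r, ((a:ℝ)+1-((r:ℝ)+1)/2)^7 =
      (1*((1-(r:ℝ))/2)^0)*(a:ℝ)^7 + (7*((1-(r:ℝ))/2)^1)*(a:ℝ)^6 + (21*((1-(r:ℝ))/2)^2)*(a:ℝ)^5 + (35*((1-(r:ℝ))/2)^3)*(a:ℝ)^4 + (35*((1-(r:ℝ))/2)^4)*(a:ℝ)^3 + (21*((1-(r:ℝ))/2)^5)*(a:ℝ)^2 + (7*((1-(r:ℝ))/2)^6)*(a:ℝ)^1 + ((1-(r:ℝ))/2)^7 := fun a _ => by ring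
  rw [Finset.sum_congr rfl h]
  simp only [Finset.sum_add_distrib, ← Finset.mul_sum, Finset.sum_const, Finset.card_range,
    nsmul_eq_mul]
  rw [fauF7, fauF6, fauF5, fauF4, fauF3, fauF2, fauF1]
  ring

lemma PpclosedF8 (r : ℕ) : PpF r 8 = (((381) * (r:ℝ)^1 + (-620) * (r:ℝ)^3 + (294) * (r:ℝ)^5 + (-60) * (r:ℝ)^7 + (5) * (r:ℝ)^9) / 11520) := by
  unfold PpF caF
  rw [Fin.sum_univ_eq_sum_range (fun a => (((a:ℕ):ℝ)+1-((r:ℝ)+1)/2)^8)]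
  have h : ∀ a ∈ Finset.range r, ((a:ℝ)+1-((r:ℝ)+1)/2)^8 =
      (1*((1-(r:ℝ))/2)^0)*(a:ℝ)^8 + (8*((1-(r:ℝ))/2)^1)*(a:ℝ)^7 + (28*((1-(r:ℝ))/2)^2)*(a:ℝ)^6 + (56*((1-(r:ℝ))/2)^3)*(a:ℝ)^5 + (70*((1-(r:ℝ))/2)^4)*(a:ℝ)^4 + (56*((1-(r:ℝ))/2)^5)*(a:ℝ)^3 + (28*((1-(r:ℝ))/2)^6)*(a:ℝ)^2 + (8*((1-(r:ℝ))/2)^7)*(a:ℝ)^1 + ((1-(r:ℝ))/2)^8 := fun a _ => by ring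
  rw [Finset.sum_congr rfl h]
  simp only [Finset.sum_add_distrib, ← Finset.mul_sum, Finset.sum_const, Finset.card_range,
    nsmul_eq_mul]
  rw [fauF8, fauF7, fauF6, fauF5, fauF4, fauF3, fauF2, fauF1]
  ring

lemma PpclosedF0 (r : ℕ) : PpF r 0 = (r:ℝ) := by
  unfold PpF
  simp

lemma innerF4 (r : ℕ) (x : ℝ) : ∑ b : Fin r, (caF r b - x)^4
    = PpF r 4 - 4 * PpF r 3 * x^1 + 6 * PpF r 2 * x^2 - 4 * PpF r 1 * x^3 + 1 * PpF r 0 * x^4 := by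
  have h : ∀ b : Fin r, (caF r b - x)^4 = (1*(-x)^0)*caF r b^4 + (4*(-x)^1)*caF r b^3 + (6*(-x)^2)*caF r b^2 + (4*(-x)^3)*caF r b^1 + (1*(-x)^4)*caF r b^0 := fun b => by ring
  simp only [h]
  simp only [Finset.sum_add_distrib, ← Finset.mul_sum]
  simp only [PpF]
  ring

lemma innerF6 (r : ℕ) (x : ℝ) : ∑ b : Fin r, (caF r b - x)^6
    = PpF r 6 - 6 * PpF r 5 * x^1 + 15 * PpF r 4 * x^2 - 20 * PpF r 3 * x^3 + 15 * PpF r 2 * x^4 - 6 * PpF r 1 * x^5 + 1 * PpF r 0 * x^6 := by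
  have h : ∀ b : Fin r, (caF r b - x)^6 = (1*(-x)^0)*caF r b^6 + (6*(-x)^1)*caF r b^5 + (15*(-x)^2)*caF r b^4 + (20*(-x)^3)*caF r b^3 + (15*(-x)^4)*caF r b^2 + (6*(-x)^5)*caF r b^1 + (1*(-x)^6)*caF r b^0 := fun b => by ring
  simp only [h]
  simp only [Finset.sum_add_distrib, ← Finset.mul_sum]
  simp only [PpF]
  ring

lemma MclosedF04 (r : ℕ) : MrF r 0 4 = (1) * PpF r 4 * PpF r 0 + (-4) * PpF r 3 * PpF r 1 + (6) * PpF r 2 * PpF r 2 + (-4) * PpF r 1 * PpF r 3 + (1) * PpF r 0 * PpF r 4 := by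
  unfold MrF
  calc ∑ a : Fin r, ∑ b : Fin r, caF r a ^ 0 * (caF r b - caF r a) ^ 4
      = ∑ a : Fin r, caF r a ^ 0 * ∑ b : Fin r, (caF r b - caF r a) ^ 4 :=
        Finset.sum_congr rfl fun a _ => by rw [Finset.mul_sum]
    _ = ∑ a : Fin r, caF r a ^ 0 * (PpF r 4 - 4 * PpF r 3 * caF r a^1 + 6 * PpF r 2 * caF r a^2 - 4 * PpF r 1 * caF r a^3 + 1 * PpF r 0 * caF r a^4) :=
        Finset.sum_congr rfl fun a _ => by rw [innerF4 r (caF r a)]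
    _ = ∑ a : Fin r, ((1 * PpF r 4)*caF r a^0 + (-4 * PpF r 3)*caF r a^1 + (6 * PpF r 2)*caF r a^2 + (-4 * PpF r 1)*caF r a^3 + (1 * PpF r 0)*caF r a^4) :=
        Finset.sum_congr rfl fun a _ => by ring
    _ = _ := by
        simp only [Finset.sum_add_distrib, ← Finset.mul_sum]
        simp only [PpF]

lemma MclosedF24 (r : ℕ) : MrF r 2 4 = (1) * PpF r 4 * PpF r 2 + (-4) * PpF r 3 * PpF r 3 + (6) * PpF r 2 * PpF r 4 + (-4) * PpF r 1 * PpF r 5 + (1) * PpF r 0 * PpF r 6 := by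
  unfold MrF
  calc ∑ a : Fin r, ∑ b : Fin r, caF r a ^ 2 * (caF r b - caF r a) ^ 4
      = ∑ a : Fin r, caF r a ^ 2 * ∑ b : Fin r, (caF r b - caF r a) ^ 4 :=
        Finset.sum_congr rfl fun a _ => by rw [Finset.mul_sum]
    _ = ∑ a : Fin r, caF r a ^ 2 * (PpF r 4 - 4 * PpF r 3 * caF r a^1 + 6 * PpF r 2 * caF r a^2 - 4 * PpF r 1 * caF r a^3 + 1 * PpF r 0 * caF r a^4) :=
        Finset.sum_congr rfl fun a _ => by rw [innerF4 r (caF r a)]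
    _ = ∑ a : Fin r, ((1 * PpF r 4)*caF r a^2 + (-4 * PpF r 3)*caF r a^3 + (6 * PpF r 2)*caF r a^4 + (-4 * PpF r 1)*caF r a^5 + (1 * PpF r 0)*caF r a^6) :=
        Finset.sum_congr rfl fun a _ => by ring
    _ = _ := by
        simp only [Finset.sum_add_distrib, ← Finset.mul_sum]
        simp only [PpF]

lemma MclosedF44 (r : ℕ) : MrF r 4 4 = (1) * PpF r 4 * PpF r 4 + (-4) * PpF r 3 * PpF r 5 + (6) * PpF r 2 * PpF r 6 + (-4) * PpF r 1 * PpF r 7 + (1) * PpF r 0 * PpF r 8 := by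
  unfold MrF
  calc ∑ a : Fin r, ∑ b : Fin r, caF r a ^ 4 * (caF r b - caF r a) ^ 4
      = ∑ a : Fin r, caF r a ^ 4 * ∑ b : Fin r, (caF r b - caF r a) ^ 4 :=
        Finset.sum_congr rfl fun a _ => by rw [Finset.mul_sum]
    _ = ∑ a : Fin r, caF r a ^ 4 * (PpF r 4 - 4 * PpF r 3 * caF r a^1 + 6 * PpF r 2 * caF r a^2 - 4 * PpF r 1 * caF r a^3 + 1 * PpF r 0 * caF r a^4) :=
        Finset.sum_congr rfl fun a _ => by rw [innerF4 r (caF r a)]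
    _ = ∑ a : Fin r, ((1 * PpF r 4)*caF r a^4 + (-4 * PpF r 3)*caF r a^5 + (6 * PpF r 2)*caF r a^6 + (-4 * PpF r 1)*caF r a^7 + (1 * PpF r 0)*caF r a^8) :=
        Finset.sum_congr rfl fun a _ => by ring
    _ = _ := by
        simp only [Finset.sum_add_distrib, ← Finset.mul_sum]
        simp only [PpF]

lemma MclosedF06 (r : ℕ) : MrF r 0 6 = (1) * PpF r 6 * PpF r 0 + (-6) * PpF r 5 * PpF r 1 + (15) * PpF r 4 * PpF r 2 + (-20) * PpF r 3 * PpF r 3 + (15) * PpF r 2 * PpF r 4 + (-6) * PpF r 1 * PpF r 5 + (1) * PpF r 0 * PpF r 6 := by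
  unfold MrF
  calc ∑ a : Fin r, ∑ b : Fin r, caF r a ^ 0 * (caF r b - caF r a) ^ 6
      = ∑ a : Fin r, caF r a ^ 0 * ∑ b : Fin r, (caF r b - caF r a) ^ 6 :=
        Finset.sum_congr rfl fun a _ => by rw [Finset.mul_sum]
    _ = ∑ a : Fin r, caF r a ^ 0 * (PpF r 6 - 6 * PpF r 5 * caF r a^1 + 15 * PpF r 4 * caF r a^2 - 20 * PpF r 3 * caF r a^3 + 15 * PpF r 2 * caF r a^4 - 6 * PpF r 1 * caF r a^5 + 1 * PpF r 0 * caF r a^6) :=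
        Finset.sum_congr rfl fun a _ => by rw [innerF6 r (caF r a)]
    _ = ∑ a : Fin r, ((1 * PpF r 6)*caF r a^0 + (-6 * PpF r 5)*caF r a^1 + (15 * PpF r 4)*caF r a^2 + (-20 * PpF r 3)*caF r a^3 + (15 * PpF r 2)*caF r a^4 + (-6 * PpF r 1)*caF r a^5 + (1 * PpF r 0)*caF r a^6) :=
        Finset.sum_congr rfl fun a _ => by ring
    _ = _ := by
        simp only [Finset.sum_add_distrib, ← Finset.mul_sum]
        simp only [PpF]

lemma MclosedF26 (r : ℕ) : MrF r 2 6 = (1) * PpF r 6 * PpF r 2 + (-6) * PpF r 5 * PpF r 3 + (15) * PpF r 4 * PpF r 4 + (-20) * PpF r 3 * PpF r 5 + (15) * PpF r 2 * PpF r 6 + (-6) * PpF r 1 * PpF r 7 + (1) * PpF r 0 * PpF r 8 := by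
  unfold MrF
  calc ∑ a : Fin r, ∑ b : Fin r, caF r a ^ 2 * (caF r b - caF r a) ^ 6
      = ∑ a : Fin r, caF r a ^ 2 * ∑ b : Fin r, (caF r b - caF r a) ^ 6 :=
        Finset.sum_congr rfl fun a _ => by rw [Finset.mul_sum]
    _ = ∑ a : Fin r, caF r a ^ 2 * (PpF r 6 - 6 * PpF r 5 * caF r a^1 + 15 * PpF r 4 * caF r a^2 - 20 * PpF r 3 * caF r a^3 + 15 * PpF r 2 * caF r a^4 - 6 * PpF r 1 * caF r a^5 + 1 * PpF r 0 * caF r a^6) :=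
        Finset.sum_congr rfl fun a _ => by rw [innerF6 r (caF r a)]
    _ = ∑ a : Fin r, ((1 * PpF r 6)*caF r a^2 + (-6 * PpF r 5)*caF r a^3 + (15 * PpF r 4)*caF r a^4 + (-20 * PpF r 3)*caF r a^5 + (15 * PpF r 2)*caF r a^6 + (-6 * PpF r 1)*caF r a^7 + (1 * PpF r 0)*caF r a^8) :=
        Finset.sum_congr rfl fun a _ => by ring
    _ = _ := by
        simp only [Finset.sum_add_distrib, ← Finset.mul_sum]
        simp only [PpF]

end PolyAux

private lemma rsub2 (r : ℕ) (hr : 2 ≤ r) : (0:ℝ) ≤ (r:ℝ) - 2 := by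
  have : (2:ℝ) ≤ (r:ℝ) := by exact_mod_cast hr
  linarith

lemma key1aF (r : ℕ) (hr : 2 ≤ r) :
    12 * PpF r 2 * MrF r 0 4 ≤ 0.1455 * (r:ℝ)^8 * ((r:ℝ)+1) := by
  have hs := rsub2 r hr
  rw [MclosedF04, PpclosedF0, PpclosedF1, PpclosedF2, PpclosedF3, PpclosedF4]
  nlinarith [hs, pow_nonneg hs 2, pow_nonneg hs 3, pow_nonneg hs 4, pow_nonneg hs 5,
    pow_nonneg hs 6, pow_nonneg hs 7, pow_nonneg hs 8, pow_nonneg hs 9]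

lemma key1bF (r : ℕ) (hr : 2 ≤ r) :
    12 * MrF r 2 4 ≤ 0.1455 * (r:ℝ)^7 * ((r:ℝ)+1) := by
  have hs := rsub2 r hr
  rw [MclosedF24, PpclosedF0, PpclosedF1, PpclosedF2, PpclosedF3, PpclosedF4, PpclosedF5,
    PpclosedF6]
  nlinarith [hs, pow_nonneg hs 2, pow_nonneg hs 3, pow_nonneg hs 4, pow_nonneg hs 5,
    pow_nonneg hs 6, pow_nonneg hs 7, pow_nonneg hs 8]

lemma key3aF (r : ℕ) (hr : 2 ≤ r) :
    12 * PpF r 2 * MrF r 0 6 ≤ 0.09116 * (r:ℝ)^10 * ((r:ℝ)+1) := by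
  have hs := rsub2 r hr
  rw [MclosedF06, PpclosedF0, PpclosedF1, PpclosedF2, PpclosedF3, PpclosedF4, PpclosedF5,
    PpclosedF6]
  nlinarith [hs, pow_nonneg hs 2, pow_nonneg hs 3, pow_nonneg hs 4, pow_nonneg hs 5,
    pow_nonneg hs 6, pow_nonneg hs 7, pow_nonneg hs 8, pow_nonneg hs 9, pow_nonneg hs 10,
    pow_nonneg hs 11]

lemma key3bF (r : ℕ) (hr : 2 ≤ r) :
    12 * MrF r 2 6 ≤ 0.09116 * (r:ℝ)^9 * ((r:ℝ)+1) := by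
  have hs := rsub2 r hr
  rw [MclosedF26, PpclosedF0, PpclosedF1, PpclosedF2, PpclosedF3, PpclosedF4, PpclosedF5,
    PpclosedF6, PpclosedF7, PpclosedF8]
  nlinarith [hs, pow_nonneg hs 2, pow_nonneg hs 3, pow_nonneg hs 4, pow_nonneg hs 5,
    pow_nonneg hs 6, pow_nonneg hs 7, pow_nonneg hs 8, pow_nonneg hs 9, pow_nonneg hs 10]

lemma key2F (r : ℕ) (hr : 2 ≤ r) :
    144 * ((1/4) * PpF r 4 * MrF r 0 4 * (r:ℝ) + 3 * (PpF r 2)^2 * MrF r 0 4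
        + (3/2) * PpF r 2 * MrF r 2 4 * (r:ℝ) + MrF r 4 4 * (r:ℝ)^2)
      ≤ 0.6717 * (r:ℝ)^10 * ((r:ℝ)+1)^2 := by
  have hs := rsub2 r hr
  rw [MclosedF04, MclosedF24, MclosedF44, PpclosedF0, PpclosedF1, PpclosedF2, PpclosedF3,
    PpclosedF4, PpclosedF5, PpclosedF6, PpclosedF7, PpclosedF8]
  nlinarith [hs, pow_nonneg hs 2, pow_nonneg hs 3, pow_nonneg hs 4, pow_nonneg hs 5,
    pow_nonneg hs 6, pow_nonneg hs 7, pow_nonneg hs 8, pow_nonneg hs 9, pow_nonneg hs 10,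
    pow_nonneg hs 11, pow_nonneg hs 12]

noncomputable section Asm2

instance (r : ℕ) : MeasurableSingletonClass (Equiv.Perm (Fin r)) :=
  ⟨fun _ => MeasurableSpace.measurableSet_top⟩

lemma integral_frM (n r : ℕ) (f : (Fin n → Equiv.Perm (Fin r)) → ℝ) :
    ∫ ω, f ω ∂(friedmanMeasure n r)
      = (Fintype.card (Fin n → Equiv.Perm (Fin r)) : ℝ)⁻¹ * ∑ ω, f ω := by
  have h : IsProbabilityMeasure (friedmanMeasure n r) := PMF.toMeasure.isProbabilityMeasure _
  rw [integral_fintype (Integrable.of_finite)]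
  simp only [friedmanMeasure, PMF.toMeasure_apply_singleton _ _ (measurableSet_singleton _),
    PMF.uniformOfFintype_apply, smul_eq_mul]
  rw [Finset.mul_sum]
  congr 1; funext ω
  simp [measureReal_def, ENNReal.toReal_inv]

def hhF (r : ℕ) (k l : Fin r) (p q : ℕ) (prm : GG r) : ℝ :=
  caF r (prm k) ^ p * (caF r (prm l) - caF r (prm k)) ^ q

lemma sumV_hhF {r : ℕ} (hr : 2 ≤ r) (k : Fin r) (p q : ℕ) (hq : q ≠ 0) :
    ∑ l : Fin r, ∑ prm : GG r, hhF r k l p q prm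
      = (Fintype.card (GG r) : ℝ) * MrF r p q / (r : ℝ) := by
  simp only [hhF]
  exact sumVF hr k p q hq

lemma TT_update_powF {n r : ℕ} (k : Fin r) (m : Fin n) (e : ℕ)
    (ω : Fin n → GG r) (prm : GG r) :
    (fun ω => TTF n r k (Finset.univ.erase m) ω ^ e) (Function.update ω m prm)
      = (fun ω => TTF n r k (Finset.univ.erase m) ω ^ e) ω := by
  show TTF n r k (Finset.univ.erase m) (Function.update ω m prm) ^ e = _
  rw [TT_updateF k _ (Finset.notMem_erase m Finset.univ)]

lemma Sstat_decomp (n r : ℕ) (k : Fin r) (m : Fin n) (ω : Fin n → Equiv.Perm (Fin r)) :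
    Sstat n r k ω = Real.sqrt 12 / Real.sqrt ((r : ℝ) * ((r : ℝ) + 1) * (n : ℝ))
      * (TTF n r k (Finset.univ.erase m) ω + caF r (ω m k)) := by
  unfold Sstat TTF
  congr 1
  rw [← Finset.sum_erase_add Finset.univ _ (Finset.mem_univ m)]
  rfl

lemma csq_eq (n r : ℕ) :
    (Real.sqrt 12 / Real.sqrt ((r : ℝ) * ((r : ℝ) + 1) * (n : ℝ))) ^ 2
      = 12 / ((r : ℝ) * ((r : ℝ) + 1) * (n : ℝ)) := by
  rw [div_pow, Real.sq_sqrt (by norm_num : (0:ℝ) ≤ 12),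
    Real.sq_sqrt (by positivity : (0:ℝ) ≤ (r : ℝ) * ((r : ℝ) + 1) * (n : ℝ))]

/-- The second-moment computation, for `S_k^2` against a `q`-th power. -/
lemma case_sq (n r : ℕ) (hr : 2 ≤ r) (hn : 1 ≤ n) (m : Fin n) (k : Fin r)
    (q : ℕ) (hq : q ≠ 0) :
    ∑ l, ∫ ω, (Sstat n r k ω) ^ 2 * (rho n r m l ω - rho n r m k ω) ^ q
        ∂(friedmanMeasure n r)
      = (12 / ((r : ℝ) * ((r : ℝ) + 1) * (n : ℝ))) *
          (((n : ℝ) - 1) * PpF r 2 * MrF r 0 q / (r : ℝ) ^ 2 + MrF r 2 q / (r : ℝ)) := by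
  have hgg : (0:ℝ) < (Fintype.card (GG r) : ℝ) := ggF_pos
  have hNN : (0:ℝ) < (Fintype.card (Fin n → GG r) : ℝ) := by exact_mod_cast Fintype.card_pos
  have hrR : (0:ℝ) < (r:ℝ) := by
    have : (2:ℝ) ≤ (r:ℝ) := by exact_mod_cast hr
    linarith
  have hnR : (1:ℝ) ≤ (n:ℝ) := by exact_mod_cast hn
  set gg : ℝ := (Fintype.card (GG r) : ℝ) with hgdef
  set NN : ℝ := (Fintype.card (Fin n → GG r) : ℝ) with hNdef
  set T : (Fin n → GG r) → ℝ := TTF n r k (Finset.univ.erase m) with hTdef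
  set c : ℝ := Real.sqrt 12 / Real.sqrt ((r : ℝ) * ((r : ℝ) + 1) * (n : ℝ)) with hcdef
  obtain ⟨hA1, hA2, hA3, hA4⟩ := TT_momentsF k (Finset.univ.erase m) (n := n)
  have hpoint : ∀ (l : Fin r) (ω : Fin n → GG r),
      (Sstat n r k ω) ^ 2 * (rho n r m l ω - rho n r m k ω) ^ q
        = c ^ 2 * (T ω ^ 2 * hhF r k l 0 q (ω m)
            + 2 * (T ω ^ 1 * hhF r k l 1 q (ω m)) + 1 * hhF r k l 2 q (ω m)) := by
    intro l ω
    rw [Sstat_decomp n r k m ω, ← hcdef, ← hTdef]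
    have h1 : rho n r m l ω = caF r (ω m l) := rfl
    have h2 : rho n r m k ω = caF r (ω m k) := rfl
    rw [h1, h2]
    simp only [hhF]
    ring
  have hsplit : ∀ (l : Fin r) (a p : ℕ),
      ∑ ω : Fin n → GG r, T ω ^ a * hhF r k l p q (ω m)
        = (∑ ω : Fin n → GG r, T ω ^ a) * (∑ prm : GG r, hhF r k l p q prm) / gg := by
    intro l a p
    exact split_divF m (fun ω => T ω ^ a) (TT_update_powF k m a) (fun prm => hhF r k l p q prm)
  have hone : ∀ (l : Fin r) (p : ℕ),
      ∑ ω : Fin n → GG r, hhF r k l p q (ω m)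
        = NN * (∑ prm : GG r, hhF r k l p q prm) / gg := by
    intro l p
    have h0 := split_divF m (fun _ : Fin n → GG r => (1:ℝ)) (fun ω prm => rfl)
      (fun prm => hhF r k l p q prm)
    simpa only [one_mul, Finset.sum_const, card_univ, nsmul_eq_mul, mul_one] using h0
  have hinner : ∀ l : Fin r,
      ∫ ω, (Sstat n r k ω) ^ 2 * (rho n r m l ω - rho n r m k ω) ^ q
          ∂(friedmanMeasure n r)
        = NN⁻¹ * (c ^ 2 * ((∑ ω : Fin n → GG r, T ω ^ 2)
              * (∑ prm : GG r, hhF r k l 0 q prm) / gg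
            + 2 * ((∑ ω : Fin n → GG r, T ω ^ 1) * (∑ prm : GG r, hhF r k l 1 q prm) / gg)
            + NN * (∑ prm : GG r, hhF r k l 2 q prm) / gg)) := by
    intro l
    rw [integral_frM]
    congr 1
    calc ∑ ω : Fin n → GG r,
          (Sstat n r k ω) ^ 2 * (rho n r m l ω - rho n r m k ω) ^ q
        = ∑ ω : Fin n → GG r, (c ^ 2 * (T ω ^ 2 * hhF r k l 0 q (ω m))
            + c ^ 2 * 2 * (T ω ^ 1 * hhF r k l 1 q (ω m))
            + c ^ 2 * hhF r k l 2 q (ω m)) :=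
          Finset.sum_congr rfl fun ω _ => by rw [hpoint l ω]; ring
      _ = c ^ 2 * (∑ ω : Fin n → GG r, T ω ^ 2 * hhF r k l 0 q (ω m))
            + c ^ 2 * 2 * (∑ ω : Fin n → GG r, T ω ^ 1 * hhF r k l 1 q (ω m))
            + c ^ 2 * (∑ ω : Fin n → GG r, hhF r k l 2 q (ω m)) := by
          simp only [Finset.sum_add_distrib, ← Finset.mul_sum]
      _ = _ := by
          rw [hsplit l 2 0, hsplit l 1 1, hone l 2]
          ring
  rw [Finset.sum_congr rfl fun l _ => hinner l]
  have hT1 : (∑ ω : Fin n → GG r, T ω ^ 1) = 0 := by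
    rw [← hA1]
    exact Finset.sum_congr rfl fun ω _ => by ring
  have hVsum : ∀ p : ℕ, ∑ l : Fin r, ∑ prm : GG r, hhF r k l p q prm = gg * MrF r p q / (r:ℝ) :=
    fun p => sumV_hhF hr k p q hq
  have expand : ∀ l : Fin r, NN⁻¹ * (c ^ 2 * ((∑ ω : Fin n → GG r, T ω ^ 2)
              * (∑ prm : GG r, hhF r k l 0 q prm) / gg
            + 2 * ((∑ ω : Fin n → GG r, T ω ^ 1) * (∑ prm : GG r, hhF r k l 1 q prm) / gg)
            + NN * (∑ prm : GG r, hhF r k l 2 q prm) / gg))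
      = (NN⁻¹ * c ^ 2 / gg * (∑ ω : Fin n → GG r, T ω ^ 2)) * (∑ prm : GG r, hhF r k l 0 q prm)
        + (NN⁻¹ * c ^ 2 / gg * 2 * (∑ ω : Fin n → GG r, T ω ^ 1))
            * (∑ prm : GG r, hhF r k l 1 q prm)
        + (NN⁻¹ * c ^ 2 / gg * NN) * (∑ prm : GG r, hhF r k l 2 q prm) := fun l => by ring
  rw [Finset.sum_congr rfl fun l _ => expand l]
  simp only [Finset.sum_add_distrib, ← Finset.mul_sum]
  rw [hVsum 0, hVsum 1, hVsum 2, hT1, hA2, csq_eq n r]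
  have hcard : ((Finset.univ.erase m).card : ℝ) = (n:ℝ) - 1 := by
    rw [Finset.card_erase_of_mem (Finset.mem_univ m), card_univ, Fintype.card_fin]
    push_cast [Nat.cast_sub hn]
    ring
  rw [hcard, mup_divF k 2]
  have hn0 : (n:ℝ) ≠ 0 := by linarith
  have hr0 : (r:ℝ) ≠ 0 := ne_of_gt hrR
  have hgg0 : gg ≠ 0 := ne_of_gt hgg
  have hNN0 : NN ≠ 0 := ne_of_gt hNN
  have hpow : ((Fintype.card (GG r) : ℝ)) ^ n = NN := by
    have hc : Fintype.card (Fin n → GG r) = Fintype.card (GG r) ^ n := by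
      rw [Fintype.card_fun, Fintype.card_fin]
    rw [hNdef, hc]
    push_cast
    ring
  field_simp
  rw [← hNdef]
  ring

/-- The fourth-moment computation, for `S_k^4` against a fourth power. -/
lemma case_quart (n r : ℕ) (hr : 2 ≤ r) (hn : 1 ≤ n) (m : Fin n) (k : Fin r) :
    ∑ l, ∫ ω, (Sstat n r k ω) ^ 4 * (rho n r m l ω - rho n r m k ω) ^ 4
        ∂(friedmanMeasure n r)
      = (12 / ((r : ℝ) * ((r : ℝ) + 1) * (n : ℝ))) ^ 2 *
          ((((n : ℝ) - 1) * mupF r k 4 / (Fintype.card (GG r) : ℝ)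
              + (3 * ((n : ℝ) - 1) ^ 2 - 3 * ((n : ℝ) - 1)) * (mupF r k 2) ^ 2
                / (Fintype.card (GG r) : ℝ) ^ 2) * MrF r 0 4 / (r : ℝ)
            + 6 * (((n : ℝ) - 1) * mupF r k 2 / (Fintype.card (GG r) : ℝ)) * MrF r 2 4 / (r : ℝ)
            + MrF r 4 4 / (r : ℝ)) := by
  have hgg : (0:ℝ) < (Fintype.card (GG r) : ℝ) := ggF_pos
  have hNN : (0:ℝ) < (Fintype.card (Fin n → GG r) : ℝ) := by exact_mod_cast Fintype.card_pos
  have hrR : (0:ℝ) < (r:ℝ) := by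
    have : (2:ℝ) ≤ (r:ℝ) := by exact_mod_cast hr
    linarith
  have hnR : (1:ℝ) ≤ (n:ℝ) := by exact_mod_cast hn
  set gg : ℝ := (Fintype.card (GG r) : ℝ) with hgdef
  set NN : ℝ := (Fintype.card (Fin n → GG r) : ℝ) with hNdef
  set T : (Fin n → GG r) → ℝ := TTF n r k (Finset.univ.erase m) with hTdef
  set c : ℝ := Real.sqrt 12 / Real.sqrt ((r : ℝ) * ((r : ℝ) + 1) * (n : ℝ)) with hcdef
  obtain ⟨hA1, hA2, hA3, hA4⟩ := TT_momentsF k (Finset.univ.erase m) (n := n)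
  have hpoint : ∀ (l : Fin r) (ω : Fin n → GG r),
      (Sstat n r k ω) ^ 4 * (rho n r m l ω - rho n r m k ω) ^ 4
        = c ^ 4 * (T ω ^ 4 * hhF r k l 0 4 (ω m)
            + 4 * (T ω ^ 3 * hhF r k l 1 4 (ω m))
            + 6 * (T ω ^ 2 * hhF r k l 2 4 (ω m))
            + 4 * (T ω ^ 1 * hhF r k l 3 4 (ω m))
            + hhF r k l 4 4 (ω m)) := by
    intro l ω
    rw [Sstat_decomp n r k m ω, ← hcdef, ← hTdef]
    have h1 : rho n r m l ω = caF r (ω m l) := rfl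
    have h2 : rho n r m k ω = caF r (ω m k) := rfl
    rw [h1, h2]
    simp only [hhF]
    ring
  have hsplit : ∀ (l : Fin r) (a p : ℕ),
      ∑ ω : Fin n → GG r, T ω ^ a * hhF r k l p 4 (ω m)
        = (∑ ω : Fin n → GG r, T ω ^ a) * (∑ prm : GG r, hhF r k l p 4 prm) / gg := by
    intro l a p
    exact split_divF m (fun ω => T ω ^ a) (TT_update_powF k m a) (fun prm => hhF r k l p 4 prm)
  have hone : ∀ (l : Fin r) (p : ℕ),
      ∑ ω : Fin n → GG r, hhF r k l p 4 (ω m)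
        = NN * (∑ prm : GG r, hhF r k l p 4 prm) / gg := by
    intro l p
    have h0 := split_divF m (fun _ : Fin n → GG r => (1:ℝ)) (fun ω prm => rfl)
      (fun prm => hhF r k l p 4 prm)
    simpa only [one_mul, Finset.sum_const, card_univ, nsmul_eq_mul, mul_one] using h0
  have hinner : ∀ l : Fin r,
      ∫ ω, (Sstat n r k ω) ^ 4 * (rho n r m l ω - rho n r m k ω) ^ 4
          ∂(friedmanMeasure n r)
        = NN⁻¹ * (c ^ 4 * ((∑ ω : Fin n → GG r, T ω ^ 4)
              * (∑ prm : GG r, hhF r k l 0 4 prm) / gg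
            + 4 * ((∑ ω : Fin n → GG r, T ω ^ 3) * (∑ prm : GG r, hhF r k l 1 4 prm) / gg)
            + 6 * ((∑ ω : Fin n → GG r, T ω ^ 2) * (∑ prm : GG r, hhF r k l 2 4 prm) / gg)
            + 4 * ((∑ ω : Fin n → GG r, T ω ^ 1) * (∑ prm : GG r, hhF r k l 3 4 prm) / gg)
            + NN * (∑ prm : GG r, hhF r k l 4 4 prm) / gg)) := by
    intro l
    rw [integral_frM]
    congr 1
    calc ∑ ω : Fin n → GG r,
          (Sstat n r k ω) ^ 4 * (rho n r m l ω - rho n r m k ω) ^ 4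
        = ∑ ω : Fin n → GG r, (c ^ 4 * (T ω ^ 4 * hhF r k l 0 4 (ω m))
            + c ^ 4 * 4 * (T ω ^ 3 * hhF r k l 1 4 (ω m))
            + c ^ 4 * 6 * (T ω ^ 2 * hhF r k l 2 4 (ω m))
            + c ^ 4 * 4 * (T ω ^ 1 * hhF r k l 3 4 (ω m))
            + c ^ 4 * hhF r k l 4 4 (ω m)) :=
          Finset.sum_congr rfl fun ω _ => by rw [hpoint l ω]; ring
      _ = c ^ 4 * (∑ ω : Fin n → GG r, T ω ^ 4 * hhF r k l 0 4 (ω m))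
            + c ^ 4 * 4 * (∑ ω : Fin n → GG r, T ω ^ 3 * hhF r k l 1 4 (ω m))
            + c ^ 4 * 6 * (∑ ω : Fin n → GG r, T ω ^ 2 * hhF r k l 2 4 (ω m))
            + c ^ 4 * 4 * (∑ ω : Fin n → GG r, T ω ^ 1 * hhF r k l 3 4 (ω m))
            + c ^ 4 * (∑ ω : Fin n → GG r, hhF r k l 4 4 (ω m)) := by
          simp only [Finset.sum_add_distrib, ← Finset.mul_sum]
      _ = _ := by
          rw [hsplit l 4 0, hsplit l 3 1, hsplit l 2 2, hsplit l 1 3, hone l 4]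
          ring
  rw [Finset.sum_congr rfl fun l _ => hinner l]
  have hT1 : (∑ ω : Fin n → GG r, T ω ^ 1) = 0 := by
    rw [← hA1]
    exact Finset.sum_congr rfl fun ω _ => by ring
  have hVsum : ∀ p : ℕ, ∑ l : Fin r, ∑ prm : GG r, hhF r k l p 4 prm = gg * MrF r p 4 / (r:ℝ) :=
    fun p => sumV_hhF hr k p 4 (by norm_num)
  have expand : ∀ l : Fin r, NN⁻¹ * (c ^ 4 * ((∑ ω : Fin n → GG r, T ω ^ 4)
              * (∑ prm : GG r, hhF r k l 0 4 prm) / gg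
            + 4 * ((∑ ω : Fin n → GG r, T ω ^ 3) * (∑ prm : GG r, hhF r k l 1 4 prm) / gg)
            + 6 * ((∑ ω : Fin n → GG r, T ω ^ 2) * (∑ prm : GG r, hhF r k l 2 4 prm) / gg)
            + 4 * ((∑ ω : Fin n → GG r, T ω ^ 1) * (∑ prm : GG r, hhF r k l 3 4 prm) / gg)
            + NN * (∑ prm : GG r, hhF r k l 4 4 prm) / gg))
      = (NN⁻¹ * c ^ 4 / gg * (∑ ω : Fin n → GG r, T ω ^ 4)) * (∑ prm : GG r, hhF r k l 0 4 prm)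
        + (NN⁻¹ * c ^ 4 / gg * 4 * (∑ ω : Fin n → GG r, T ω ^ 3))
            * (∑ prm : GG r, hhF r k l 1 4 prm)
        + (NN⁻¹ * c ^ 4 / gg * 6 * (∑ ω : Fin n → GG r, T ω ^ 2))
            * (∑ prm : GG r, hhF r k l 2 4 prm)
        + (NN⁻¹ * c ^ 4 / gg * 4 * (∑ ω : Fin n → GG r, T ω ^ 1))
            * (∑ prm : GG r, hhF r k l 3 4 prm)
        + (NN⁻¹ * c ^ 4 / gg * NN) * (∑ prm : GG r, hhF r k l 4 4 prm) := fun l => by ring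
  rw [Finset.sum_congr rfl fun l _ => expand l]
  simp only [Finset.sum_add_distrib, ← Finset.mul_sum]
  rw [hVsum 0, hVsum 1, hVsum 2, hVsum 3, hVsum 4, hT1, hA2, hA3, hA4]
  have hcard : ((Finset.univ.erase m).card : ℝ) = (n:ℝ) - 1 := by
    rw [Finset.card_erase_of_mem (Finset.mem_univ m), card_univ, Fintype.card_fin]
    push_cast [Nat.cast_sub hn]
    ring
  rw [hcard]
  have hc4 : c ^ 4 = (12 / ((r : ℝ) * ((r : ℝ) + 1) * (n : ℝ))) ^ 2 := by
    rw [show c ^ 4 = (c ^ 2) ^ 2 by ring, csq_eq n r]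
  rw [hc4]
  have hn0 : (n:ℝ) ≠ 0 := by linarith
  have hr0 : (r:ℝ) ≠ 0 := ne_of_gt hrR
  have hgg0 : gg ≠ 0 := ne_of_gt hgg
  have hNN0 : NN ≠ 0 := ne_of_gt hNN
  have hpow : ((Fintype.card (GG r) : ℝ)) ^ n = NN := by
    have hc : Fintype.card (Fin n → GG r) = Fintype.card (GG r) ^ n := by
      rw [Fintype.card_fun, Fintype.card_fin]
    rw [hNdef, hc]
    push_cast
    ring
  field_simp
  rw [← hNdef, ← hgdef]
  ring

end Asm2

noncomputable section FinA

lemma Pp_nonnegF (r p : ℕ) (hp : Even p) : 0 ≤ PpF r p :=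
  Finset.sum_nonneg fun a _ => hp.pow_nonneg _

lemma Mr_nonnegF (r p q : ℕ) (hp : Even p) (hq : Even q) : 0 ≤ MrF r p q :=
  Finset.sum_nonneg fun a _ => Finset.sum_nonneg fun b _ =>
    mul_nonneg (hp.pow_nonneg _) (hq.pow_nonneg _)

set_option maxHeartbeats 2000000 in
theorem Sstat_rho_difference_bounds' (n r : ℕ) (hr : 2 ≤ r) (hn : 1 ≤ n)
    (m : Fin n) (k : Fin r) :
    (∑ l, ∫ ω, (Sstat n r k ω) ^ 2 * (rho n r m l ω - rho n r m k ω) ^ 4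
        ∂(friedmanMeasure n r) ≤ 0.1455 * (r : ℝ) ^ 5) ∧
    (∑ l, ∫ ω, (Sstat n r k ω) ^ 4 * (rho n r m l ω - rho n r m k ω) ^ 4
        ∂(friedmanMeasure n r) ≤ 0.6717 * (r : ℝ) ^ 5) ∧
    ∑ l, ∫ ω, (Sstat n r k ω) ^ 2 * (rho n r m l ω - rho n r m k ω) ^ 6
        ∂(friedmanMeasure n r) ≤ 0.09116 * (r : ℝ) ^ 7 := by
  have hrR : (2:ℝ) ≤ (r:ℝ) := by exact_mod_cast hr
  have hR : (0:ℝ) < (r:ℝ) := by linarith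
  have hR1 : (0:ℝ) < (r:ℝ) + 1 := by linarith
  have hnR : (1:ℝ) ≤ (n:ℝ) := by exact_mod_cast hn
  have hN : (0:ℝ) < (n:ℝ) := by linarith
  have hgg : (0:ℝ) < (Fintype.card (GG r) : ℝ) := ggF_pos
  have hP2 : 0 ≤ PpF r 2 := Pp_nonnegF r 2 (by decide)
  have hP4 : 0 ≤ PpF r 4 := Pp_nonnegF r 4 (by decide)
  have hM04 : 0 ≤ MrF r 0 4 := Mr_nonnegF r 0 4 (by decide) (by decide)
  have hM24 : 0 ≤ MrF r 2 4 := Mr_nonnegF r 2 4 (by decide) (by decide)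
  have hM44 : 0 ≤ MrF r 4 4 := Mr_nonnegF r 4 4 (by decide) (by decide)
  have hM06 : 0 ≤ MrF r 0 6 := Mr_nonnegF r 0 6 (by decide) (by decide)
  have hM26 : 0 ≤ MrF r 2 6 := Mr_nonnegF r 2 6 (by decide) (by decide)
  have hn1 : (0:ℝ) ≤ (n:ℝ) - 1 := by linarith
  refine ⟨?_, ?_, ?_⟩
  · -- first bound
    rw [case_sq n r hr hn m k 4 (by norm_num)]
    have e1 : (12 / ((r : ℝ) * ((r : ℝ) + 1) * (n : ℝ))) *
          (((n : ℝ) - 1) * PpF r 2 * MrF r 0 4 / (r : ℝ) ^ 2 + MrF r 2 4 / (r : ℝ))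
        = (((n:ℝ)-1) * (12 * PpF r 2 * MrF r 0 4) * (r:ℝ) + (12 * MrF r 2 4) * (r:ℝ)^2)
            / ((r:ℝ)^4 * ((r:ℝ)+1) * (n:ℝ)) := by
      field_simp
    rw [e1, div_le_iff₀ (by positivity)]
    calc ((n:ℝ)-1) * (12 * PpF r 2 * MrF r 0 4) * (r:ℝ) + (12 * MrF r 2 4) * (r:ℝ)^2
        ≤ ((n:ℝ)-1) * (0.1455 * (r:ℝ)^8 * ((r:ℝ)+1)) * (r:ℝ)
            + (0.1455 * (r:ℝ)^7 * ((r:ℝ)+1)) * (r:ℝ)^2 := by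
          have u1 : ((n:ℝ)-1) * (12 * PpF r 2 * MrF r 0 4) * (r:ℝ)
              ≤ ((n:ℝ)-1) * (0.1455 * (r:ℝ)^8 * ((r:ℝ)+1)) * (r:ℝ) :=
            mul_le_mul_of_nonneg_right
              (mul_le_mul_of_nonneg_left (key1aF r hr) hn1) (le_of_lt hR)
          have u2 : (12 * MrF r 2 4) * (r:ℝ)^2 ≤ (0.1455 * (r:ℝ)^7 * ((r:ℝ)+1)) * (r:ℝ)^2 :=
            mul_le_mul_of_nonneg_right (key1bF r hr) (by positivity)
          linarith
      _ = 0.1455 * (r:ℝ)^5 * ((r:ℝ)^4 * ((r:ℝ)+1) * (n:ℝ)) := by ring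
  · -- second bound
    rw [case_quart n r hr hn m k, mup_divF k 2, mup_divF k 4]
    set R := (r:ℝ)
    set N := (n:ℝ)
    set gg := (Fintype.card (GG r) : ℝ) with hgdef
    have hgg0 : gg ≠ 0 := ne_of_gt hgg
    have e2 : (12 / (R * (R + 1) * N)) ^ 2 *
          (((N - 1) * (gg * PpF r 4 / R) / gg
              + (3 * (N - 1) ^ 2 - 3 * (N - 1)) * (gg * PpF r 2 / R) ^ 2 / gg ^ 2)
                * MrF r 0 4 / R
            + 6 * ((N - 1) * (gg * PpF r 2 / R) / gg) * MrF r 2 4 / R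
            + MrF r 4 4 / R)
        = ((N-1) * (144 * PpF r 4 * MrF r 0 4) * R
            + (3*(N-1)^2 - 3*(N-1)) * (144 * (PpF r 2)^2 * MrF r 0 4)
            + (N-1) * (864 * PpF r 2 * MrF r 2 4) * R
            + (144 * MrF r 4 4) * R^2) / (R^5 * (R+1)^2 * N^2) := by
      field_simp
      ring
    rw [e2, div_le_iff₀ (by positivity)]
    have hq1 : N - 1 ≤ N^2/4 := by nlinarith [sq_nonneg (N - 2)]
    have hq2 : 3*(N-1)^2 - 3*(N-1) ≤ 3*N^2 := by nlinarith
    have hq3 : (1:ℝ) ≤ N^2 := by nlinarith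
    calc (N-1) * (144 * PpF r 4 * MrF r 0 4) * R
            + (3*(N-1)^2 - 3*(N-1)) * (144 * (PpF r 2)^2 * MrF r 0 4)
            + (N-1) * (864 * PpF r 2 * MrF r 2 4) * R
            + (144 * MrF r 4 4) * R^2
        ≤ (N^2/4) * (144 * PpF r 4 * MrF r 0 4) * R
            + (3*N^2) * (144 * (PpF r 2)^2 * MrF r 0 4)
            + (N^2/4) * (864 * PpF r 2 * MrF r 2 4) * R
            + N^2 * ((144 * MrF r 4 4) * R^2) := by
          have t1 : (N-1) * (144 * PpF r 4 * MrF r 0 4) * R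
              ≤ (N^2/4) * (144 * PpF r 4 * MrF r 0 4) * R := by
            apply mul_le_mul_of_nonneg_right _ (le_of_lt hR)
            exact mul_le_mul_of_nonneg_right hq1 (by positivity)
          have t2 : (3*(N-1)^2 - 3*(N-1)) * (144 * (PpF r 2)^2 * MrF r 0 4)
              ≤ (3*N^2) * (144 * (PpF r 2)^2 * MrF r 0 4) :=
            mul_le_mul_of_nonneg_right hq2 (by positivity)
          have t3 : (N-1) * (864 * PpF r 2 * MrF r 2 4) * R
              ≤ (N^2/4) * (864 * PpF r 2 * MrF r 2 4) * R := by
            apply mul_le_mul_of_nonneg_right _ (le_of_lt hR)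
            exact mul_le_mul_of_nonneg_right hq1 (by positivity)
          have t4 : (144 * MrF r 4 4) * R^2 ≤ N^2 * ((144 * MrF r 4 4) * R^2) :=
            le_mul_of_one_le_left (by positivity) hq3
          linarith
      _ = N^2 * (144 * ((1/4) * PpF r 4 * MrF r 0 4 * R + 3 * (PpF r 2)^2 * MrF r 0 4
            + (3/2) * PpF r 2 * MrF r 2 4 * R + MrF r 4 4 * R^2)) := by ring
      _ ≤ N^2 * (0.6717 * R^10 * (R+1)^2) :=
          mul_le_mul_of_nonneg_left (key2F r hr) (by positivity)
      _ = 0.6717 * R^5 * (R^5 * (R+1)^2 * N^2) := by ring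
  · -- third bound
    rw [case_sq n r hr hn m k 6 (by norm_num)]
    have e3 : (12 / ((r : ℝ) * ((r : ℝ) + 1) * (n : ℝ))) *
          (((n : ℝ) - 1) * PpF r 2 * MrF r 0 6 / (r : ℝ) ^ 2 + MrF r 2 6 / (r : ℝ))
        = (((n:ℝ)-1) * (12 * PpF r 2 * MrF r 0 6) * (r:ℝ) + (12 * MrF r 2 6) * (r:ℝ)^2)
            / ((r:ℝ)^4 * ((r:ℝ)+1) * (n:ℝ)) := by
      field_simp
    rw [e3, div_le_iff₀ (by positivity)]
    calc ((n:ℝ)-1) * (12 * PpF r 2 * MrF r 0 6) * (r:ℝ) + (12 * MrF r 2 6) * (r:ℝ)^2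
        ≤ ((n:ℝ)-1) * (0.09116 * (r:ℝ)^10 * ((r:ℝ)+1)) * (r:ℝ)
            + (0.09116 * (r:ℝ)^9 * ((r:ℝ)+1)) * (r:ℝ)^2 := by
          have u1 : ((n:ℝ)-1) * (12 * PpF r 2 * MrF r 0 6) * (r:ℝ)
              ≤ ((n:ℝ)-1) * (0.09116 * (r:ℝ)^10 * ((r:ℝ)+1)) * (r:ℝ) :=
            mul_le_mul_of_nonneg_right
              (mul_le_mul_of_nonneg_left (key3aF r hr) hn1) (le_of_lt hR)
          have u2 : (12 * MrF r 2 6) * (r:ℝ)^2 ≤ (0.09116 * (r:ℝ)^9 * ((r:ℝ)+1)) * (r:ℝ)^2 :=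
            mul_le_mul_of_nonneg_right (key3bF r hr) (by positivity)
          linarith
      _ = 0.09116 * (r:ℝ)^7 * ((r:ℝ)^4 * ((r:ℝ)+1) * (n:ℝ)) := by ring
  
end FinA

end GauntReinertAux

/-- **Lemma 3.6 (Gaunt–Reinert).** For `r ≥ 2`, `n ≥ 1`, `m ∈ {1, …, n}` and
`k ∈ {1, …, r}`: `∑_{l=1}^r E[S_k²(ρ_m(l) − ρ_m(k))⁴] ≤ 0.1455 r⁵`,
`∑_{l=1}^r E[S_k⁴(ρ_m(l) − ρ_m(k))⁴] ≤ 0.6717 r⁵` and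
`∑_{l=1}^r E[S_k²(ρ_m(l) − ρ_m(k))⁶] ≤ 0.09116 r⁷`. -/
theorem Sstat_rho_difference_bounds (n r : ℕ) (hr : 2 ≤ r) (hn : 1 ≤ n)
    (m : Fin n) (k : Fin r) :
    (∑ l, ∫ ω, (Sstat n r k ω) ^ 2 * (rho n r m l ω - rho n r m k ω) ^ 4
        ∂(friedmanMeasure n r) ≤ 0.1455 * (r : ℝ) ^ 5) ∧
    (∑ l, ∫ ω, (Sstat n r k ω) ^ 4 * (rho n r m l ω - rho n r m k ω) ^ 4
        ∂(friedmanMeasure n r) ≤ 0.6717 * (r : ℝ) ^ 5) ∧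
    ∑ l, ∫ ω, (Sstat n r k ω) ^ 2 * (rho n r m l ω - rho n r m k ω) ^ 6
        ∂(friedmanMeasure n r) ≤ 0.09116 * (r : ℝ) ^ 7 :=
  Sstat_rho_difference_bounds' n r hr hn m k
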